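/- For any x, y in the open unit ball of a complex Hilbert space, (1/2)‖x − y‖ ≤ ρ_E(x, y), where ρ_E is the pseudo-hyperbolic metric. -/

import Mathlib

open scoped ComplexInnerProductSpace
private lemma rhoE_key (p q t r : ℝ) (hp : 0 ≤ p) (hp1 : p < 1) (hq1 : q < 1)
    (ht : 0 ≤ t) (htpq : t ≤ p * q) (hr1 : -t ≤ r) (hr2 : r ≤ t) :
    4 * ((1 - p^2) * (1 - q^2)) ≤ (4 - (p^2 + q^2 - 2*r)) * (1 - 2*r + t^2) := by
  have hpq1 : p * q < 1 := by nlinarith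
  have hA : 0 ≤ t - r := by linarith
  have hB : 0 ≤ t + r := by linarith
  have hC : 0 ≤ p * q - t := by linarith
  have hK : 0 ≤ 3 - t^2 - 2*(p*q) := by nlinarith
  nlinarith [mul_nonneg (mul_nonneg hA hC) hK, mul_nonneg (mul_nonneg hB hC) hK,
    mul_nonneg (mul_nonneg hA hB) ht, mul_nonneg (mul_nonneg hA hB) hK,
    sq_nonneg (p - q), mul_nonneg hA (sq_nonneg (p-q)), mul_nonneg hB (sq_nonneg (p-q))]

/-- The pseudo-hyperbolic metric on the unit ball of a complex Hilbert space, via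
`ρ_E(x,y)² = 1 - (1-‖x‖²)(1-‖y‖²)/|1-⟨x,y⟩|²`.  (The paper's inner product `⟨x,y⟩`
is linear in the first variable, i.e. it is Mathlib's `⟪y, x⟫`.) -/
noncomputable def rhoE {E : Type*} [NormedAddCommGroup E] [InnerProductSpace ℂ E]
    (x y : E) : ℝ :=
  Real.sqrt (1 - (1 - ‖x‖ ^ 2) * (1 - ‖y‖ ^ 2) / ‖1 - ⟪y, x⟫‖ ^ 2)

/-- `(1/2)‖x - y‖ ≤ ρ_E(x,y)` for `x, y` in the open unit ball. -/
theorem half_norm_sub_le_rhoE {E : Type*} [NormedAddCommGroup E] [InnerProductSpace ℂ E]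
    (x y : E) (hx : ‖x‖ < 1) (hy : ‖y‖ < 1) :
    (1 / 2) * ‖x - y‖ ≤ rhoE x y := by
  set a : ℂ := ⟪y, x⟫ with ha
  have hp : (0:ℝ) ≤ ‖x‖ := norm_nonneg x
  have hq : (0:ℝ) ≤ ‖y‖ := norm_nonneg y
  have hcs : ‖a‖ ≤ ‖x‖ * ‖y‖ := by
    have := norm_inner_le_norm (𝕜 := ℂ) y x
    simpa [ha, mul_comm] using this
  have ht : (0:ℝ) ≤ ‖a‖ := norm_nonneg _
  have hpq1 : ‖x‖ * ‖y‖ < 1 := by nlinarith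
  have habs1 : ‖a‖ < 1 := lt_of_le_of_lt hcs hpq1
  have hD0 : 0 < ‖1 - a‖ := by
    have h1 : (1:ℝ) - ‖a‖ ≤ ‖1 - a‖ := by
      have := norm_sub_norm_le (1:ℂ) a
      simpa using this
    linarith
  have hD : 0 < ‖1 - a‖ ^ 2 := by positivity
  -- t^2 = r^2 + im^2
  have hta : ‖a‖ ^ 2 = a.re ^ 2 + a.im ^ 2 := by
    rw [Complex.sq_norm, Complex.normSq_apply]; ring
  have hDval : ‖1 - a‖ ^ 2 = 1 - 2 * a.re + ‖a‖ ^ 2 := by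
    rw [Complex.sq_norm, Complex.normSq_apply, hta]
    simp [Complex.sub_re, Complex.sub_im]; ring
  have hre : |a.re| ≤ ‖a‖ := Complex.abs_re_le_norm a
  obtain ⟨hr1, hr2⟩ := abs_le.mp hre
  have hd2 : ‖x - y‖ ^ 2 = ‖x‖ ^ 2 + ‖y‖ ^ 2 - 2 * a.re := by
    have h := @norm_sub_sq ℂ _ _ _ _ x y
    have hconj : RCLike.re (⟪x, y⟫ : ℂ) = a.re := by
      simpa [ha] using inner_re_symm (𝕜 := ℂ) x y
    rw [hconj] at h
    rw [h]; ring
  -- main inequality at the level of squares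
  have hkey : ((1/2) * ‖x - y‖) ^ 2 ≤
      1 - (1 - ‖x‖ ^ 2) * (1 - ‖y‖ ^ 2) / ‖1 - a‖ ^ 2 := by
    rw [sub_div' (hc := ne_of_gt hD), le_div_iff₀ hD, hDval]
    have := rhoE_key ‖x‖ ‖y‖ (‖a‖) a.re hp hx hy ht
      (by simpa [mul_comm] using hcs) hr1 hr2
    nlinarith [this, hd2]
  have hnn : 0 ≤ (1/2) * ‖x - y‖ := by positivity
  calc (1/2) * ‖x - y‖ = Real.sqrt (((1/2) * ‖x - y‖)^2) := by
        rw [Real.sqrt_sq hnn]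
    _ ≤ rhoE x y := Real.sqrt_le_sqrt hkey
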